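/- Let p be an odd prime, l ≥ 1, and k ≥ 1. For each residue r with 0 < r < p, the map C_r : {0, ..., p^l − 1} → {0, ..., p^l − 1} defined by C_r(x') = ⌊(p·x' + r)^{p^k} / p^{k+1}⌋ mod p^l is a bijection. -/

import Mathlib

theorem power_coding_odd_prime_pow (p : ℕ) (hp : p.Prime) (hodd : p ≠ 2)
    (l : ℕ) (hl : 1 ≤ l) (k : ℕ) (hk : 1 ≤ k)
    (r : ℕ) (hr0 : 0 < r) (hrp : r < p) :
    Set.BijOn (fun x' : ℕ => ((p * x' + r) ^ p ^ k / p ^ (k + 1)) % p ^ l)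
      (Set.Iio (p ^ l)) (Set.Iio (p ^ l)) := by
  have hpl : 0 < p ^ l := pow_pos hp.pos l
  have hmaps : Set.MapsTo (fun x' : ℕ => ((p * x' + r) ^ p ^ k / p ^ (k + 1)) % p ^ l)
      (Set.Iio (p ^ l)) (Set.Iio (p ^ l)) := fun x _ => Nat.mod_lt _ hpl
  refine ((Set.finite_Iio _).injOn_iff_bijOn_of_mapsTo hmaps).mp ?_
  intro x hx y hy hxy
  simp only [Set.mem_Iio] at hx hy
  simp only at hxy
  have hpodd : Odd p := hp.odd_of_ne_two hodd
  set u : ℤ := p * x + r with hu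
  set v : ℤ := p * y + r with hv
  have hpu : ¬ (p : ℤ) ∣ u := by
    intro h
    have hpx : (p : ℤ) ∣ (p : ℤ) * x := ⟨x, rfl⟩
    have hr : (p : ℤ) ∣ (r : ℤ) := (dvd_add_right hpx).mp h
    rw [Int.natCast_dvd_natCast] at hr
    exact absurd (Nat.le_of_dvd hr0 hr) (not_le.mpr hrp)
  have hdvd : (p : ℤ) ∣ u - v := ⟨(x : ℤ) - y, by ring⟩
  have hLTE := Int.emultiplicity_pow_sub_pow hp hpodd hdvd hpu (p ^ k)
  have hek : emultiplicity p (p ^ k) = (k : ℕ∞) := emultiplicity_pow_self_of_prime hp.prime k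
  rw [hek] at hLTE
  -- Step 1: p^(k+1) divides u^(p^k) - v^(p^k)
  have h1 : (p : ℤ) ^ (k + 1) ∣ u ^ p ^ k - v ^ p ^ k := by
    apply pow_dvd_of_le_emultiplicity
    rw [hLTE]
    have h1' : (1 : ℕ∞) ≤ emultiplicity ((p : ℤ)) (u - v) := by
      exact_mod_cast le_emultiplicity_of_pow_dvd (show (p : ℤ) ^ 1 ∣ u - v by simpa using hdvd)
    calc ((k + 1 : ℕ) : ℕ∞) = 1 + (k : ℕ∞) := by push_cast; ring
    _ ≤ emultiplicity ((p : ℤ)) (u - v) + (k : ℕ∞) := by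
        exact add_le_add_left h1' _
  -- translate to Nat.ModEq
  have hA : ((p * x + r) ^ p ^ k : ℤ) = u ^ p ^ k := by push_cast [hu]; ring
  have hB : ((p * y + r) ^ p ^ k : ℤ) = v ^ p ^ k := by push_cast [hv]; ring
  have h2 : (p * x + r) ^ p ^ k ≡ (p * y + r) ^ p ^ k [MOD p ^ (k + 1)] := by
    rw [Nat.modEq_iff_dvd]
    push_cast
    rw [hA, hB]
    exact dvd_sub_comm.mp h1
  -- Step 2: equal quotients mod p^l plus equal remainders give congruence mod p^(k+l+1)
  set A := (p * x + r) ^ p ^ k with hAdef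
  set B := (p * y + r) ^ p ^ k with hBdef
  have hq : A / p ^ (k + 1) ≡ B / p ^ (k + 1) [MOD p ^ l] := hxy
  have hq' : p ^ (k + 1) * (A / p ^ (k + 1)) ≡ p ^ (k + 1) * (B / p ^ (k + 1))
      [MOD p ^ (k + 1) * p ^ l] := Nat.ModEq.mul_left' _ hq
  have hrem : A % p ^ (k + 1) = B % p ^ (k + 1) := h2
  have h3 : A ≡ B [MOD p ^ (k + 1) * p ^ l] := by
    have := hq'.add_right (A % p ^ (k + 1))
    rw [Nat.div_add_mod] at this
    rw [hrem] at this
    rw [Nat.div_add_mod] at this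
    exact this
  -- Step 3: LTE gives p^(l+1) ∣ u - v
  have h4 : (p : ℤ) ^ (k + 1 + l) ∣ u ^ p ^ k - v ^ p ^ k := by
    have h3' := Nat.modEq_iff_dvd.mp h3
    have h5 : ((p ^ (k + 1) * p ^ l : ℕ) : ℤ) = (p : ℤ) ^ (k + 1 + l) := by
      push_cast; ring
    rw [h5] at h3'
    have h6' := dvd_sub_comm.mp h3'
    have hab : ((A : ℤ)) - B = u ^ p ^ k - v ^ p ^ k := by
      rw [hAdef, hBdef]; push_cast; rw [hA, hB]
    rwa [hab] at h6'
  have h6 : ((l + 1 : ℕ) : ℕ∞) ≤ emultiplicity ((p : ℤ)) (u - v) := by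
    have h7 : ((k + 1 + l : ℕ) : ℕ∞) ≤ emultiplicity ((p : ℤ)) (u - v) + (k : ℕ∞) :=
      hLTE ▸ le_emultiplicity_of_pow_dvd h4
    have h8 : ((k + 1 + l : ℕ) : ℕ∞) = ((l + 1 : ℕ) : ℕ∞) + (k : ℕ∞) := by
      push_cast; ring
    rw [h8] at h7
    exact (WithTop.add_le_add_iff_right (ENat.coe_ne_top k)).mp h7
  have h9 : (p : ℤ) ^ (l + 1) ∣ u - v := pow_dvd_of_le_emultiplicity h6
  have h10 : (p : ℤ) ^ l ∣ (x : ℤ) - y := by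
    have huv : u - v = p * ((x : ℤ) - y) := by rw [hu, hv]; ring
    rw [huv, pow_succ, mul_comm ((p:ℤ)^l)] at h9
    exact (mul_dvd_mul_iff_left (by exact_mod_cast hp.pos.ne' : (p:ℤ) ≠ 0)).mp h9
  have hx' : (x : ℤ) < (p : ℤ) ^ l := by exact_mod_cast hx
  have hy' : (y : ℤ) < (p : ℤ) ^ l := by exact_mod_cast hy
  have hx0 : (0 : ℤ) ≤ x := Int.natCast_nonneg x
  have hy0 : (0 : ℤ) ≤ y := Int.natCast_nonneg y
  have h11 : |(x : ℤ) - y| < (p : ℤ) ^ l := by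
    rw [abs_sub_lt_iff]; constructor <;> linarith
  have h12 := Int.eq_zero_of_abs_lt_dvd h10 h11
  have : (x : ℤ) = y := by linarith
  exact_mod_cast this
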